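/- The process matrix W^{Cyril} = (1/4)[ I⊗I⊗I⊗I + (1/√2)( σ³⊗σ³⊗σ³⊗I + σ³⊗I⊗σ¹⊗σ¹ ) ] on (ℂ²)^{⊗4} (ordered A_I, A_O, B_I, B_O) is positive semidefinite. -/

import Mathlib

open scoped BigOperators Kronecker ComplexOrder

/-- Pauli X. -/
def sigma1 : Matrix (Fin 2) (Fin 2) ℂ := !![0, 1; 1, 0]

/-- Pauli Z. -/
def sigma3 : Matrix (Fin 2) (Fin 2) ℂ := !![1, 0; 0, -1]

/-- The process matrix
`W^{Cyril} = (1/4)[I⊗I⊗I⊗I + (1/√2)(σ³⊗σ³⊗σ³⊗I + σ³⊗I⊗σ¹⊗σ¹)]`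
on `(ℂ²)^{⊗4}` with tensor factors ordered `A_I, A_O, B_I, B_O` and grouped
as `(A_I × A_O) × (B_I × B_O)`. -/
noncomputable def WCyril :
    Matrix ((Fin 2 × Fin 2) × (Fin 2 × Fin 2)) ((Fin 2 × Fin 2) × (Fin 2 × Fin 2)) ℂ :=
  (1 / 4 : ℂ) • ((1 : Matrix ((Fin 2 × Fin 2) × (Fin 2 × Fin 2)) ((Fin 2 × Fin 2) × (Fin 2 × Fin 2)) ℂ)
    + ((Real.sqrt 2 : ℂ))⁻¹ •
      ((sigma3 ⊗ₖ sigma3) ⊗ₖ (sigma3 ⊗ₖ (1 : Matrix (Fin 2) (Fin 2) ℂ))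
        + (sigma3 ⊗ₖ (1 : Matrix (Fin 2) (Fin 2) ℂ)) ⊗ₖ (sigma1 ⊗ₖ sigma1)))

open Matrix

lemma kron_conjT {l m n p : Type*} (A : Matrix l m ℂ) (B : Matrix n p ℂ) :
    (A ⊗ₖ B)ᴴ = Aᴴ ⊗ₖ Bᴴ := by
  ext ⟨i, j⟩ ⟨k, l⟩
  simp [Matrix.conjTranspose_apply, Matrix.kroneckerMap_apply]

lemma s3_herm : sigma3ᴴ = sigma3 := by
  ext i j; fin_cases i <;> fin_cases j <;> simp [sigma3]

lemma s1_herm : sigma1ᴴ = sigma1 := by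
  ext i j; fin_cases i <;> fin_cases j <;> simp [sigma1]

lemma s3s3 : sigma3 * sigma3 = 1 := by
  simp [sigma3, Matrix.mul_fin_two, Matrix.one_fin_two]

lemma s1s1 : sigma1 * sigma1 = 1 := by
  simp [sigma1, Matrix.mul_fin_two, Matrix.one_fin_two]

lemma s1s3 : sigma1 * sigma3 = (-1 : ℂ) • (sigma3 * sigma1) := by
  simp [sigma1, sigma3, Matrix.mul_fin_two]

/-- `W^{Cyril}` is positive semidefinite. -/
theorem WCyril_posSemidef : WCyril.PosSemidef := by
  set P : Matrix ((Fin 2 × Fin 2) × (Fin 2 × Fin 2)) ((Fin 2 × Fin 2) × (Fin 2 × Fin 2)) ℂ :=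
    (sigma3 ⊗ₖ sigma3) ⊗ₖ (sigma3 ⊗ₖ (1 : Matrix (Fin 2) (Fin 2) ℂ)) with hPdef
  set Q : Matrix ((Fin 2 × Fin 2) × (Fin 2 × Fin 2)) ((Fin 2 × Fin 2) × (Fin 2 × Fin 2)) ℂ :=
    (sigma3 ⊗ₖ (1 : Matrix (Fin 2) (Fin 2) ℂ)) ⊗ₖ (sigma1 ⊗ₖ sigma1) with hQdef
  have h2 : ((Real.sqrt 2 : ℝ) : ℂ) * ((Real.sqrt 2 : ℝ) : ℂ) = 2 := by
    rw [← Complex.ofReal_mul, Real.mul_self_sqrt (by norm_num)]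
    norm_num
  have hc2 : ((Real.sqrt 2 : ℂ))⁻¹ * ((Real.sqrt 2 : ℂ))⁻¹ = (2 : ℂ)⁻¹ := by
    rw [← mul_inv, h2]
  have hcstar : star ((Real.sqrt 2 : ℂ))⁻¹ = ((Real.sqrt 2 : ℂ))⁻¹ := by
    simp [Complex.star_def, ← Complex.ofReal_inv]
  have hP2 : P * P = 1 := by
    rw [hPdef, ← Matrix.mul_kronecker_mul, ← Matrix.mul_kronecker_mul,
      ← Matrix.mul_kronecker_mul, s3s3, Matrix.one_mul, Matrix.one_kronecker_one,
      Matrix.one_kronecker_one]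
  have hQ2 : Q * Q = 1 := by
    rw [hQdef, ← Matrix.mul_kronecker_mul, ← Matrix.mul_kronecker_mul,
      ← Matrix.mul_kronecker_mul, s3s3, s1s1, Matrix.one_mul, Matrix.one_kronecker_one,
      Matrix.one_kronecker_one]
  have hQP : Q * P = (-1 : ℂ) • (P * Q) := by
    rw [hPdef, hQdef, ← Matrix.mul_kronecker_mul, ← Matrix.mul_kronecker_mul,
      ← Matrix.mul_kronecker_mul, ← Matrix.mul_kronecker_mul, ← Matrix.mul_kronecker_mul,
      ← Matrix.mul_kronecker_mul, s3s3, s1s3]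
    simp only [Matrix.one_mul, Matrix.mul_one, Matrix.smul_kronecker, Matrix.kronecker_smul]
  have hPH : Pᴴ = P := by
    rw [hPdef, kron_conjT, kron_conjT, kron_conjT, s3_herm, Matrix.conjTranspose_one]
  have hQH : Qᴴ = Q := by
    rw [hQdef, kron_conjT, kron_conjT, kron_conjT, s3_herm, s1_herm, Matrix.conjTranspose_one]
  set N : Matrix ((Fin 2 × Fin 2) × (Fin 2 × Fin 2)) ((Fin 2 × Fin 2) × (Fin 2 × Fin 2)) ℂ :=
    1 + ((Real.sqrt 2 : ℂ))⁻¹ • (P + Q) with hNdef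
  have hNH : Nᴴ = N := by
    rw [hNdef]
    simp [Matrix.conjTranspose_add, Matrix.conjTranspose_smul, hPH, hQH, hcstar]
  have hNN : N * N = (2 : ℂ) • N := by
    rw [hNdef]
    simp only [Matrix.add_mul, Matrix.mul_add, Matrix.smul_mul, Matrix.mul_smul,
      Matrix.one_mul, Matrix.mul_one, hP2, hQ2, hQP, neg_one_smul, smul_neg, smul_smul, hc2, smul_add]
    match_scalars <;> ring
  have hW : WCyril = ((((Real.sqrt 2 : ℂ))⁻¹ / 2) • N)ᴴ * ((((Real.sqrt 2 : ℂ))⁻¹ / 2) • N) := by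
    rw [Matrix.conjTranspose_smul, hNH, Matrix.smul_mul, Matrix.mul_smul, hNN,
      smul_smul, smul_smul]
    have hs : star (((Real.sqrt 2 : ℂ))⁻¹ / 2) * ((((Real.sqrt 2 : ℂ))⁻¹) / 2) * 2
        = 1 / 4 := by
      rw [star_div₀, hcstar, star_ofNat]
      field_simp
      linear_combination (-2:ℂ) * h2
    rw [hs, hNdef, WCyril]
  rw [hW]
  exact Matrix.posSemidef_conjTranspose_mul_self _
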